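/- If G is a graph on n ≥ 3 vertices containing a Hamiltonian cycle, then G has a double dominating set of size at most ⌈2n/3⌉. -/

import Mathlib

open SimpleGraph

/-- `S` is a double dominating set of `G`: every vertex has at least two
vertices of its closed neighborhood in `S`. -/
def IsDoubleDomSet {V : Type*} [Fintype V] [DecidableEq V]
    (G : SimpleGraph V) [DecidableRel G.Adj] (S : Finset V) : Prop :=
  ∀ v : V, 2 ≤ (S ∩ insert v (G.neighborFinset v)).card

/-- The double domination number `γ×2(G)`. -/
noncomputable def doubleDomNum {V : Type*} [Fintype V] [DecidableEq V]
    (G : SimpleGraph V) [DecidableRel G.Adj] : ℕ :=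
  sInf {k | ∃ S : Finset V, IsDoubleDomSet G S ∧ S.card = k}

/-- `H` is a minor of `G`. -/
def HasMinor {V W : Type*} (G : SimpleGraph V) (H : SimpleGraph W) : Prop :=
  ∃ f : W → Set V,
    (∀ w, (f w).Nonempty) ∧
    (∀ w, (G.induce (f w)).Connected) ∧
    (Pairwise fun w₁ w₂ => Disjoint (f w₁) (f w₂)) ∧
    ∀ ⦃w₁ w₂⦄, H.Adj w₁ w₂ → ∃ a ∈ f w₁, ∃ b ∈ f w₂, G.Adj a b

/-- A graph is outerplanar iff it has no `K₄` minor and no `K_{2,3}` minor. -/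
def Outerplanar {V : Type*} (G : SimpleGraph V) : Prop :=
  ¬ HasMinor G (⊤ : SimpleGraph (Fin 4)) ∧
  ¬ HasMinor G (completeBipartiteGraph (Fin 2) (Fin 3))

/-- Maximal outerplanar: outerplanar, and adding any missing edge destroys
outerplanarity. -/
def MaximalOuterplanar {V : Type*} (G : SimpleGraph V) : Prop :=
  Outerplanar G ∧
  ∀ u v : V, u ≠ v → ¬ G.Adj u v →
    ¬ Outerplanar (G ⊔ SimpleGraph.fromEdgeSet {s(u, v)})

/-- `T` is an internal triangle of `G`: a triangle none of whose edges lies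
on any Hamiltonian cycle (for a maximal outerplanar graph on `≥ 4` vertices
the Hamiltonian cycle, i.e. the boundary of the outer face, is unique). -/
def IsInternalTriangle {V : Type*} [DecidableEq V] (G : SimpleGraph V) (T : Finset V) : Prop :=
  ∃ a b c : V, T = {a, b, c} ∧ a ≠ b ∧ a ≠ c ∧ b ≠ c ∧
    G.Adj a b ∧ G.Adj a c ∧ G.Adj b c ∧
    ∀ ⦃v : V⦄ (p : G.Walk v v), p.IsHamiltonianCycle →
      s(a, b) ∉ p.edges ∧ s(a, c) ∉ p.edges ∧ s(b, c) ∉ p.edges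

/-- `IsTwoTreeOn G s`: the induced subgraph of `G` on `s` is a 2-tree,
built from a triangle by repeatedly adding a vertex joined exactly to the
two endpoints of an existing edge. -/
inductive IsTwoTreeOn {V : Type*} [DecidableEq V] (G : SimpleGraph V) :
    Finset V → Prop
  | triangle {a b c : V} : a ≠ b → a ≠ c → b ≠ c →
      G.Adj a b → G.Adj a c → G.Adj b c → IsTwoTreeOn G {a, b, c}
  | grow {s : Finset V} {x y v : V} : IsTwoTreeOn G s → x ∈ s → y ∈ s →
      G.Adj x y → v ∉ s → (∀ u ∈ s, G.Adj v u ↔ u = x ∨ u = y) →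
      IsTwoTreeOn G (insert v s)

/-- `G` is a 2-tree (equivalently, a maximal `K₄`-minor-free graph). -/
def IsTwoTree {V : Type*} [Fintype V] [DecidableEq V] (G : SimpleGraph V) : Prop :=
  IsTwoTreeOn G Finset.univ


lemma filter_mod3_card (n : ℕ) :
    ((Finset.range n).filter (fun i => ¬ i % 3 = 2)).card ≤ (2 * n + 2) / 3 := by
  have h1 : ((Finset.range n).filter (fun i => i % 3 = 2)).card = n / 3 := by
    have he : (Finset.range n).filter (fun i => i % 3 = 2)
        = (Finset.range n).filter (fun i => 3 ∣ i + 1) :=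
      Finset.filter_congr (fun i _ => by constructor <;> omega)
    rw [he]
    exact Nat.card_multiples n 3
  have h2 := Finset.card_filter_add_card_filter_not
    (s := Finset.range n) (p := fun i => i % 3 = 2)
  rw [Finset.card_range] at h2
  omega

lemma key_lemma {V : Type*} [Fintype V] [DecidableEq V]
    (G : SimpleGraph V) [DecidableRel G.Adj] (n : ℕ) (hn : 3 ≤ n) (f : ℕ → V)
    (hsurj : ∀ w, ∃ i, i < n ∧ f i = w)
    (hinj : ∀ i, i < n → ∀ j, j < n → f i = f j → i = j)
    (hadj : ∀ i, i < n → G.Adj (f i) (f ((i + 1) % n))) :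
    ∃ S : Finset V, IsDoubleDomSet G S ∧ S.card ≤ (2 * n + 2) / 3 := by
  refine ⟨((Finset.range n).filter (fun i => ¬ i % 3 = 2)).image f, ?_, ?_⟩
  · intro w
    obtain ⟨i, hi, rfl⟩ := hsurj w
    set S := ((Finset.range n).filter (fun i => ¬ i % 3 = 2)).image f with hS
    set N := insert (f i) (G.neighborFinset (f i)) with hN
    obtain ⟨j, hjn, hje, hjm⟩ : ∃ j, j < n ∧ (i + 1) % n = j ∧
        ((i = n - 1 ∧ j = 0) ∨ j = i + 1) := by
      rcases Nat.lt_or_ge (i + 1) n with h | h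
      · exact ⟨i + 1, h, Nat.mod_eq_of_lt h, Or.inr rfl⟩
      · refine ⟨0, by omega, ?_, Or.inl ⟨by omega, rfl⟩⟩
        rw [show i + 1 = n by omega, Nat.mod_self]
    obtain ⟨k, hkn, hke, hkm⟩ : ∃ k, k < n ∧ (k + 1) % n = i ∧
        ((i = 0 ∧ k = n - 1) ∨ k + 1 = i) := by
      rcases Nat.eq_zero_or_pos i with h | h
      · refine ⟨n - 1, by omega, ?_, Or.inl ⟨h, rfl⟩⟩
        rw [show n - 1 + 1 = n by omega, Nat.mod_self, h]
      · exact ⟨i - 1, by omega, by rw [show i - 1 + 1 = i by omega, Nat.mod_eq_of_lt hi],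
          Or.inr (by omega)⟩
    have hfj : f j ∈ N := by
      have := hadj i hi
      rw [hje] at this
      simp only [hN, Finset.mem_insert, mem_neighborFinset]
      exact Or.inr this
    have hfk : f k ∈ N := by
      have := hadj k hkn
      rw [hke] at this
      simp only [hN, Finset.mem_insert, mem_neighborFinset]
      exact Or.inr this.symm
    have hfi : f i ∈ N := Finset.mem_insert_self _ _
    have hmemS : ∀ m, m < n → ¬ m % 3 = 2 → f m ∈ S := by
      intro m hm hm3
      exact Finset.mem_image.2 ⟨m, Finset.mem_filter.2 ⟨Finset.mem_range.2 hm, hm3⟩, rfl⟩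
    have two_le : ∀ a b : V, a ≠ b → a ∈ S ∩ N → b ∈ S ∩ N → 2 ≤ (S ∩ N).card := by
      intro a b hab ha hb
      have hsub : ({a, b} : Finset V) ⊆ S ∩ N := by
        intro x hx
        rcases Finset.mem_insert.1 hx with rfl | hx
        · exact ha
        · rw [Finset.mem_singleton.1 hx]; exact hb
      have : ({a, b} : Finset V).card = 2 := by
        rw [Finset.card_insert_of_notMem (by simp [hab]), Finset.card_singleton]
      rw [← this]
      exact Finset.card_le_card hsub
    have h3 : i % 3 = 0 ∨ i % 3 = 1 ∨ i % 3 = 2 := by omega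
    rcases h3 with h3 | h3 | h3
    · refine two_le (f i) (f j) ?_ (Finset.mem_inter.2 ⟨hmemS i hi (by omega), hfi⟩)
        (Finset.mem_inter.2 ⟨hmemS j hjn (by omega), hfj⟩)
      intro h; have := hinj i hi j hjn h; omega
    · refine two_le (f i) (f k) ?_ (Finset.mem_inter.2 ⟨hmemS i hi (by omega), hfi⟩)
        (Finset.mem_inter.2 ⟨hmemS k hkn (by omega), hfk⟩)
      intro h; have := hinj i hi k hkn h; omega
    · refine two_le (f k) (f j) ?_ (Finset.mem_inter.2 ⟨hmemS k hkn (by omega), hfk⟩)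
        (Finset.mem_inter.2 ⟨hmemS j hjn (by omega), hfj⟩)
      intro h; have := hinj k hkn j hjn h; omega
  · exact (Finset.card_image_le).trans (filter_mod3_card n)

/-- A graph on `n ≥ 3` vertices with a Hamiltonian cycle has a
double dominating set of size at most `⌈2n/3⌉`. -/
theorem exists_doubleDomSet_of_hamiltonian {V : Type*} [Fintype V] [DecidableEq V]
    (G : SimpleGraph V) [DecidableRel G.Adj] (hn : 3 ≤ Fintype.card V)
    (hham : ∃ (v : V) (p : G.Walk v v), p.IsHamiltonianCycle) :
    ∃ S : Finset V, IsDoubleDomSet G S ∧ S.card ≤ (2 * Fintype.card V + 2) / 3 := by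
  obtain ⟨v, p, hp⟩ := hham
  set n := Fintype.card V with hndef
  set L := p.support.tail with hL
  have hsupp : p.support = v :: L := p.support_eq_cons
  have hlen : L.length = n := by
    have h1 : p.support.length = p.length + 1 := p.length_support
    have h2 : p.length = n := hp.length_eq
    simp [hL, List.length_tail, h1, h2]
  have hLn : ∀ i, i < n → i < L.length := fun i h => by omega
  set f : ℕ → V := fun i => L.getD i v with hf
  have hfeq : ∀ i (h : i < n), f i = L[i]'(hLn i h) := fun i h =>
    List.getD_eq_getElem _ _ (hLn i h)
  -- surjectivity
  have hsurj : ∀ w, ∃ i, i < n ∧ f i = w := by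
    intro w
    have hw : w ∈ L := by
      rw [hL, ← p.support_tail_of_not_nil hp.1.not_nil]
      exact hp.isHamiltonian_tail.mem_support w
    obtain ⟨i, hi, hie⟩ := List.mem_iff_getElem.1 hw
    exact ⟨i, by omega, by rw [hfeq i (by omega)]; exact hie⟩
  -- injectivity
  have hnd : L.Nodup := hp.1.support_nodup
  have hinj : ∀ i, i < n → ∀ j, j < n → f i = f j → i = j := by
    intro i hi j hj hij
    rw [hfeq i hi, hfeq j hj] at hij
    exact (hnd.getElem_inj_iff).1 hij
  -- adjacency
  have hchain : ∀ (i : ℕ) (h : i < (v :: L).length - 1),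
      G.Adj ((v :: L).get ⟨i, by omega⟩) ((v :: L).get ⟨i + 1, by omega⟩) := by
    have hc := p.isChain_adj_support
    rw [hsupp] at hc
    intro i h
    exact List.isChain_iff_getElem.1 hc i (by omega)
  have hsl : p.support.length = n + 1 := by
    have h1 : p.support.length = p.length + 1 := p.length_support
    rw [h1, hp.length_eq]
  have hlast : L[n-1]'(by omega) = v := by
    have h2 : p.support[p.support.length - 1]'(by omega) = v :=
      (List.getLast_eq_getElem _).symm.trans p.getLast_support
    calc L[n-1]'(by omega) = p.support[(n-1)+1]'(by omega) := List.getElem_tail _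
      _ = v := by convert h2 using 2; omega
  have hadj : ∀ i, i < n → G.Adj (f i) (f ((i + 1) % n)) := by
    intro i hi
    rcases Nat.lt_or_ge (i + 1) n with h | h
    · rw [Nat.mod_eq_of_lt h, hfeq i hi, hfeq (i+1) h]
      have := hchain (i + 1) (by simp; omega)
      simpa using this
    · have hie : i = n - 1 := by omega
      subst hie
      rw [show (n - 1 + 1) % n = 0 by rw [show n - 1 + 1 = n by omega]; exact Nat.mod_self n,
        hfeq (n - 1) hi, hfeq 0 (by omega), hlast]
      have := hchain 0 (by simp; omega)
      simpa using this
  exact key_lemma G n hn f hsurj hinj hadj
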